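/- Under the equivalence relation on S_n generated by replacing a factor of three adjacent letters whose order pattern lies in {123, 132, 312} by a rearrangement forming another pattern in {123, 132, 312}, the value of the smallest letter positioned strictly to the right of the letter 1 is invariant (and it exists in one permutation iff it exists in any equivalent permutation). -/
import Mathlib


/-- A pattern of length 3, given as a relation on the three letter values. -/
abbrev Pat : Type := ℕ → ℕ → ℕ → Prop

def p123 : Pat := fun a b c => a < b ∧ b < c
def p132 : Pat := fun a b c => a < c ∧ c < b
def p213 : Pat := fun a b c => b < a ∧ a < c
def p231 : Pat := fun a b c => c < a ∧ a < b
def p312 : Pat := fun a b c => b < c ∧ c < a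
def p321 : Pat := fun a b c => c < b ∧ b < a

/-- The factor of `w` at positions `i, i+1, i+2` has order pattern `p`. -/
def PatAt {n : ℕ} (w : Equiv.Perm (Fin n)) (i : ℕ) (h : i + 3 ≤ n) (p : Pat) : Prop :=
  p (w ⟨i, by omega⟩).val (w ⟨i + 1, by omega⟩).val (w ⟨i + 2, by omega⟩).val

/-- One replacement move: a factor of three adjacent letters whose pattern lies in some
part `Q` of the replacement partition is rearranged (same letters, all other positions
unchanged) into a factor whose pattern also lies in `Q`. -/
def Step3 {n : ℕ} (parts : Set (Set Pat)) (w w' : Equiv.Perm (Fin n)) : Prop :=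
  ∃ Q ∈ parts, ∃ i : ℕ, ∃ h : i + 3 ≤ n,
    (∀ j : Fin n, (j.val < i ∨ i + 3 ≤ j.val) → w j = w' j) ∧
    (∃ p ∈ Q, PatAt w i h p) ∧ (∃ q ∈ Q, PatAt w' i h q)

/-- The equivalence relation on `S_n` generated by the replacement moves. -/
def PattEquiv {n : ℕ} (parts : Set (Set Pat)) :
    Equiv.Perm (Fin n) → Equiv.Perm (Fin n) → Prop :=
  Relation.EqvGen (Step3 parts)

/-- The number of equivalence classes of `S_n` under the given replacement partition. -/
noncomputable def classCount (n : ℕ) (parts : Set (Set Pat)) : ℕ :=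
  Nat.card (Quotient (Setoid.mk (PattEquiv (n := n) parts)
    (Relation.EqvGen.is_equivalence _)))

/-- `w` avoids every pattern in `P` as a consecutive pattern. -/
def AvoidsAll {n : ℕ} (w : Equiv.Perm (Fin n)) (P : Set Pat) : Prop :=
  ∀ (i : ℕ) (h : i + 3 ≤ n), ∀ p ∈ P, ¬ PatAt w i h p

/-- A V-permutation: the letters strictly decrease until the letter `1`
(the smallest value, `0` in `Fin n`) and then strictly increase. -/
def IsVPerm {n : ℕ} (w : Equiv.Perm (Fin n)) : Prop :=
  ∃ i : Fin n, w i = ⟨0, i.pos⟩ ∧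
    (∀ j k : Fin n, j < k → k ≤ i → w k < w j) ∧
    (∀ j k : Fin n, i ≤ j → j < k → w j < w k)

/-- Motzkin path: steps U=1, F=0, D=-1, partial sums nonnegative, total sum 0. -/
def IsMotzkinPath (l : List ℤ) : Prop :=
  (∀ x ∈ l, x = 1 ∨ x = 0 ∨ x = -1) ∧ (∀ k : ℕ, 0 ≤ (l.take k).sum) ∧ l.sum = 0

/-- The `n`-th Motzkin number: the number of Motzkin paths of length `n`. -/
noncomputable def motzkin (n : ℕ) : ℕ :=
  Nat.card {l : List ℤ // l.length = n ∧ IsMotzkinPath l}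


lemma extract_x {n : ℕ} (w : Equiv.Perm (Fin n)) (z : Fin n) (hzval : z.val = 0)
    (i : ℕ) (h : i + 3 ≤ n) (p : Pat)
    (hp : p ∈ ({p123, p132, p312} : Set Pat)) (hpat : PatAt w i h p)
    (hz : i ≤ (w.symm z).val ∧ (w.symm z).val < i + 3) :
    ∃ x : Fin n,
      i ≤ (w.symm x).val ∧ (w.symm x).val < i + 3 ∧ w.symm z < w.symm x ∧
      0 < x.val ∧
      ∀ j : Fin n, i ≤ j.val → j.val < i + 3 → w j ≠ z → x ≤ w j := by
  have hpa : i < n := by omega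
  have hpb : i + 1 < n := by omega
  have hpc : i + 2 < n := by omega
  have hwz : w (w.symm z) = z := w.apply_symm_apply z
  have hpat' : p (w ⟨i, hpa⟩).val (w ⟨i+1, hpb⟩).val (w ⟨i+2, hpc⟩).val := hpat
  have keyA : (w.symm z).val = i → w ⟨i, hpa⟩ = z := fun h1 => by
    rw [show (⟨i, hpa⟩ : Fin n) = w.symm z from Fin.ext h1.symm, hwz]
  have keyB : (w.symm z).val = i + 1 → w ⟨i+1, hpb⟩ = z := fun h1 => by
    rw [show (⟨i+1, hpb⟩ : Fin n) = w.symm z from Fin.ext h1.symm, hwz]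
  have keyC : (w.symm z).val = i + 2 → w ⟨i+2, hpc⟩ = z := fun h1 => by
    rw [show (⟨i+2, hpc⟩ : Fin n) = w.symm z from Fin.ext h1.symm, hwz]
  simp only [Set.mem_insert_iff, Set.mem_singleton_iff] at hp
  rcases hp with hp | hp | hp <;> subst hp
  · -- p123 : A < B ∧ B < C, zero at position i, x = w ⟨i+1⟩
    obtain ⟨hab, hbc⟩ : (w ⟨i, hpa⟩).val < (w ⟨i+1, hpb⟩).val ∧
        (w ⟨i+1, hpb⟩).val < (w ⟨i+2, hpc⟩).val := hpat'
    have hza : (w.symm z).val = i := by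
      rcases (show (w.symm z).val = i ∨ (w.symm z).val = i + 1 ∨ (w.symm z).val = i + 2
        by omega) with h1 | h1 | h1
      · exact h1
      · have := congrArg Fin.val (keyB h1); omega
      · have := congrArg Fin.val (keyC h1); omega
    refine ⟨w ⟨i+1, hpb⟩, ?_, ?_, ?_, by omega, ?_⟩
    · rw [w.symm_apply_apply]; simp only [Fin.val_mk]; omega
    · rw [w.symm_apply_apply]; simp only [Fin.val_mk]; omega
    · rw [w.symm_apply_apply]; exact Fin.lt_def.mpr (by simp only [Fin.val_mk]; omega)
    · intro j hj1 hj2 hjz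
      rcases (show j.val = i ∨ j.val = i + 1 ∨ j.val = i + 2 by omega) with h1 | h1 | h1
      · exact absurd (by rw [show j = (⟨i, hpa⟩ : Fin n) from Fin.ext h1, keyA hza]) hjz
      · rw [show j = (⟨i+1, hpb⟩ : Fin n) from Fin.ext h1]
      · rw [show j = (⟨i+2, hpc⟩ : Fin n) from Fin.ext h1]
        exact le_of_lt (Fin.lt_def.mpr hbc)
  · -- p132 : A < C ∧ C < B, zero at position i, x = w ⟨i+2⟩
    obtain ⟨hac, hcb⟩ : (w ⟨i, hpa⟩).val < (w ⟨i+2, hpc⟩).val ∧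
        (w ⟨i+2, hpc⟩).val < (w ⟨i+1, hpb⟩).val := hpat'
    have hza : (w.symm z).val = i := by
      rcases (show (w.symm z).val = i ∨ (w.symm z).val = i + 1 ∨ (w.symm z).val = i + 2
        by omega) with h1 | h1 | h1
      · exact h1
      · have := congrArg Fin.val (keyB h1); omega
      · have := congrArg Fin.val (keyC h1); omega
    refine ⟨w ⟨i+2, hpc⟩, ?_, ?_, ?_, by omega, ?_⟩
    · rw [w.symm_apply_apply]; simp only [Fin.val_mk]; omega
    · rw [w.symm_apply_apply]; simp only [Fin.val_mk]; omega
    · rw [w.symm_apply_apply]; exact Fin.lt_def.mpr (by simp only [Fin.val_mk]; omega)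
    · intro j hj1 hj2 hjz
      rcases (show j.val = i ∨ j.val = i + 1 ∨ j.val = i + 2 by omega) with h1 | h1 | h1
      · exact absurd (by rw [show j = (⟨i, hpa⟩ : Fin n) from Fin.ext h1, keyA hza]) hjz
      · rw [show j = (⟨i+1, hpb⟩ : Fin n) from Fin.ext h1]
        exact le_of_lt (Fin.lt_def.mpr hcb)
      · rw [show j = (⟨i+2, hpc⟩ : Fin n) from Fin.ext h1]
  · -- p312 : B < C ∧ C < A, zero at position i+1, x = w ⟨i+2⟩
    obtain ⟨hbc, hca⟩ : (w ⟨i+1, hpb⟩).val < (w ⟨i+2, hpc⟩).val ∧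
        (w ⟨i+2, hpc⟩).val < (w ⟨i, hpa⟩).val := hpat'
    have hza : (w.symm z).val = i + 1 := by
      rcases (show (w.symm z).val = i ∨ (w.symm z).val = i + 1 ∨ (w.symm z).val = i + 2
        by omega) with h1 | h1 | h1
      · have := congrArg Fin.val (keyA h1); omega
      · exact h1
      · have := congrArg Fin.val (keyC h1); omega
    refine ⟨w ⟨i+2, hpc⟩, ?_, ?_, ?_, by omega, ?_⟩
    · rw [w.symm_apply_apply]; simp only [Fin.val_mk]; omega
    · rw [w.symm_apply_apply]; simp only [Fin.val_mk]; omega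
    · rw [w.symm_apply_apply]; exact Fin.lt_def.mpr (by simp only [Fin.val_mk]; omega)
    · intro j hj1 hj2 hjz
      rcases (show j.val = i ∨ j.val = i + 1 ∨ j.val = i + 2 by omega) with h1 | h1 | h1
      · rw [show j = (⟨i, hpa⟩ : Fin n) from Fin.ext h1]
        exact le_of_lt (Fin.lt_def.mpr hca)
      · exact absurd (by rw [show j = (⟨i+1, hpb⟩ : Fin n) from Fin.ext h1, keyB hza]) hjz
      · rw [show j = (⟨i+2, hpc⟩ : Fin n) from Fin.ext h1]

lemma isLeast_congr {α : Type*} [LinearOrder α] {A B : Set α} {x : α}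
    (hxA : x ∈ A) (hxB : x ∈ B)
    (hAB : ∀ y ∈ A, y ∉ B → x ≤ y) (hBA : ∀ y ∈ B, y ∉ A → x ≤ y)
    (v : α) : IsLeast A v ↔ IsLeast B v := by
  have main : ∀ {A B : Set α}, x ∈ A → x ∈ B → (∀ y ∈ A, y ∉ B → x ≤ y) →
      (∀ y ∈ B, y ∉ A → x ≤ y) → IsLeast A v → IsLeast B v := by
    rintro A B hxA hxB hAB hBA ⟨hvA, hvlb⟩
    have hvx : v ≤ x := hvlb hxA
    have hvB : v ∈ B := by
      by_contra hvB
      have hxv := hAB v hvA hvB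
      exact hvB ((le_antisymm hvx hxv) ▸ hxB)
    refine ⟨hvB, fun u hu => ?_⟩
    by_cases huA : u ∈ A
    · exact hvlb huA
    · exact hvx.trans (hBA u hu huA)
  exact ⟨main hxA hxB hAB hBA, main hxB hxA hBA hAB⟩

lemma step_invariant {n : ℕ} (hn : 1 ≤ n) {w w' : Equiv.Perm (Fin n)}
    (hs : Step3 {({p123, p132, p312} : Set Pat)} w w') (v : Fin n) :
    IsLeast {u : Fin n | w.symm ⟨0, hn⟩ < w.symm u} v ↔
      IsLeast {u : Fin n | w'.symm ⟨0, hn⟩ < w'.symm u} v := by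
  obtain ⟨Q, hQ, i, h, hout, ⟨p, hpQ, hpat⟩, ⟨q, hqQ, hqat⟩⟩ := hs
  rw [Set.mem_singleton_iff] at hQ
  subst hQ
  set z : Fin n := ⟨0, hn⟩ with hzdef
  have F1 : ∀ u : Fin n, ((w.symm u).val < i ∨ i + 3 ≤ (w.symm u).val) →
      w'.symm u = w.symm u := by
    intro u hu
    have h1 := hout (w.symm u) hu
    rw [w.apply_symm_apply] at h1
    exact w'.symm_apply_eq.mpr h1
  have F1' : ∀ u : Fin n, ((w'.symm u).val < i ∨ i + 3 ≤ (w'.symm u).val) →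
      w.symm u = w'.symm u := by
    intro u hu
    have h1 := (hout (w'.symm u) hu).symm
    rw [w'.apply_symm_apply] at h1
    exact w.symm_apply_eq.mpr h1
  by_cases hzb : (w.symm z).val < i ∨ i + 3 ≤ (w.symm z).val
  · -- the letter 0 is outside the block: the sets are equal
    have hzz : w'.symm z = w.symm z := F1 z hzb
    have hset : {u : Fin n | w.symm z < w.symm u} = {u : Fin n | w'.symm z < w'.symm u} := by
      ext u
      simp only [Set.mem_setOf_eq, hzz]
      by_cases hub : (w.symm u).val < i ∨ i + 3 ≤ (w.symm u).val
      · rw [F1 u hub]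
      · push_neg at hub
        have hub' : i ≤ (w'.symm u).val ∧ (w'.symm u).val < i + 3 := by
          by_contra hc
          rw [not_and_or, not_le, not_lt] at hc
          have h2 := F1' u hc
          have h3 := congrArg Fin.val h2
          omega
        simp only [Fin.lt_def]
        omega
    rw [hset]
  · -- the letter 0 is inside the block
    push_neg at hzb
    have hzb' : i ≤ (w'.symm z).val ∧ (w'.symm z).val < i + 3 := by
      by_contra hc
      rw [not_and_or, not_le, not_lt] at hc
      have h2 := F1' z hc
      have h3 := congrArg Fin.val h2
      omega
    obtain ⟨x, hx1, hx2, hx3, hx4, hx5⟩ := extract_x w z rfl i h p hpQ hpat hzb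
    obtain ⟨x', hy1, hy2, hy3, hy4, hy5⟩ := extract_x w' z rfl i h q hqQ hqat hzb'
    -- the position of x in w' is also in the block
    have hxb' : i ≤ (w'.symm x).val ∧ (w'.symm x).val < i + 3 := by
      by_contra hc
      rw [not_and_or, not_le, not_lt] at hc
      have h2 := congrArg Fin.val (F1' x hc)
      omega
    have hxb : i ≤ (w.symm x').val ∧ (w.symm x').val < i + 3 := by
      by_contra hc
      rw [not_and_or, not_le, not_lt] at hc
      have h2 := congrArg Fin.val (F1 x' hc)
      omega
    have hxz : x ≠ z := fun hc => by rw [hc] at hx4; simp [hzdef] at hx4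
    have hxz' : x' ≠ z := fun hc => by rw [hc] at hy4; simp [hzdef] at hy4
    have hxx : x' = x := by
      have h1 : x' ≤ x := by
        have := hy5 (w'.symm x) hxb'.1 hxb'.2
          (by rw [w'.apply_symm_apply]; exact hxz)
        rwa [w'.apply_symm_apply] at this
      have h2 : x ≤ x' := by
        have := hx5 (w.symm x') hxb.1 hxb.2
          (by rw [w.apply_symm_apply]; exact hxz')
        rwa [w.apply_symm_apply] at this
      exact le_antisymm h1 h2
    subst hxx
    refine isLeast_congr (x := x') ?_ ?_ ?_ ?_ v
    · exact hx3
    · exact hy3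
    · intro y hyA hyB
      simp only [Set.mem_setOf_eq] at hyA hyB
      have hyblk : i ≤ (w.symm y).val ∧ (w.symm y).val < i + 3 := by
        by_contra hc
        rw [not_and_or, not_le, not_lt] at hc
        have heqpos := F1 y hc
        rcases hc with hlt | hge
        · have := Fin.lt_def.mp hyA; omega
        · exact hyB (by rw [heqpos, Fin.lt_def]; omega)
      have hyne : y ≠ z := by
        intro hc; subst hc; exact lt_irrefl _ hyA
      have := hx5 (w.symm y) hyblk.1 hyblk.2 (by rw [w.apply_symm_apply]; exact hyne)
      rwa [w.apply_symm_apply] at this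
    · intro y hyB hyA
      simp only [Set.mem_setOf_eq] at hyA hyB
      have hyblk : i ≤ (w'.symm y).val ∧ (w'.symm y).val < i + 3 := by
        by_contra hc
        rw [not_and_or, not_le, not_lt] at hc
        have heqpos := F1' y hc
        rcases hc with hlt | hge
        · have := Fin.lt_def.mp hyB; omega
        · exact hyA (by rw [heqpos, Fin.lt_def]; omega)
      have hyne : y ≠ z := by
        intro hc; subst hc; exact lt_irrefl _ hyB
      have := hy5 (w'.symm y) hyblk.1 hyblk.2 (by rw [w'.apply_symm_apply]; exact hyne)
      rwa [w'.apply_symm_apply] at this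

/-- under the `{123, 132, 312}`-equivalence, the smallest letter strictly to
the right of the letter `1` is invariant (including its existence). -/
theorem stmt7 (n : ℕ) (hn : 1 ≤ n) (w w' : Equiv.Perm (Fin n))
    (h : PattEquiv {({p123, p132, p312} : Set Pat)} w w') :
    ∀ v : Fin n,
      IsLeast {u : Fin n | w.symm ⟨0, by omega⟩ < w.symm u} v ↔
        IsLeast {u : Fin n | w'.symm ⟨0, by omega⟩ < w'.symm u} v := by

  intro v
  induction h with
  | rel a b hab => exact step_invariant hn hab v
  | refl a => exact Iff.rfl
  | symm a b _ ih => exact ih.symm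
  | trans a b c _ _ ih1 ih2 => exact ih1.trans ih2
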